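/- For λ = (λ_1,…,λ_n) ∈ ℂ^n, there exist bounded operators B_1,…,B_n on H_n with (λ_1 I − L_1)B_1 + … + (λ_n I − L_n)B_n = I if and only if |λ_1|² + … + |λ_n|² > 1. Equivalently, the joint right spectrum of the left creation operators L = (L_1,…,L_n) is the closed unit ball { λ ∈ ℂ^n : |λ_1|² + … + |λ_n|² ≤ 1 }. -/

import Mathlib

noncomputable section

instance {n : ℕ} : DecidableEq (FreeMonoid (Fin n)) := Classical.decEq _

/-- `n`-variable Fock space `H_n = ℓ²(F_n^+)`. -/
abbrev Hn (n : ℕ) : Type := lp (fun _ : FreeMonoid (Fin n) => ℂ) 2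

/-- The standard orthonormal basis vector `ξ_w` of `H_n`. -/
def xi {n : ℕ} (w : FreeMonoid (Fin n)) : Hn n := lp.single 2 w 1

section Aux

variable {n : ℕ}
local notation "⟪" x ", " y "⟫" => @inner ℂ _ _ x y

lemma xi_ne_zero (w : FreeMonoid (Fin n)) : (xi w : Hn n) ≠ 0 := by
  intro h
  have h2 := congrArg (fun f : Hn n => (f : ∀ _ : FreeMonoid (Fin n), ℂ) w) h
  simp only [xi] at h2
  rw [lp.single_apply_self] at h2
  simp at h2

instance : Nontrivial (Hn n) := ⟨xi 1, 0, xi_ne_zero 1⟩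

lemma inner_xi_left (w : FreeMonoid (Fin n)) (f : Hn n) : ⟪xi w, f⟫ = f w := by
  simp [xi, lp.inner_single_left]

lemma inner_xi_right (f : Hn n) (w : FreeMonoid (Fin n)) :
    ⟪f, xi w⟫ = starRingEnd ℂ (f w) := by
  simp [xi, lp.inner_single_right]

lemma hasSum_expand (x : Hn n) : HasSum (fun w => x w • xi w) x := by
  have h := lp.hasSum_single (E := fun _ : FreeMonoid (Fin n) => ℂ) ENNReal.ofNat_ne_top x
  convert h using 2 with w
  simp [xi, ← lp.single_smul]

lemma xi_inner_xi (w v : FreeMonoid (Fin n)) :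
    ⟪xi w, xi v⟫ = if w = v then (1:ℂ) else 0 := by
  rw [inner_xi_left]
  simp [xi, lp.single_apply, Pi.single_apply]


lemma clm_ext_xi (φ ψ : Hn n →L[ℂ] ℂ) (h : ∀ w, φ (xi w) = ψ (xi w)) (x : Hn n) :
    φ x = ψ x := by
  have h1 := (hasSum_expand x).mapL φ
  have h2 := (hasSum_expand x).mapL ψ
  simp only [ContinuousLinearMap.map_smul] at h1 h2
  simp only [h] at h1
  exact h1.unique h2

lemma freeMonoid_cons_inj {i j : Fin n} {w v : FreeMonoid (Fin n)}
    (h : FreeMonoid.of i * w = FreeMonoid.of j * v) : i = j ∧ w = v := by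
  have := congrArg FreeMonoid.toList h
  simp only [FreeMonoid.toList_mul, FreeMonoid.toList_of, List.cons_append, List.nil_append,
    List.cons.injEq] at this
  exact ⟨this.1, FreeMonoid.toList.injective this.2⟩

variable (L : Fin n → (Hn n →L[ℂ] Hn n))
  (hL : ∀ i w, L i (xi w) = xi (FreeMonoid.of i * w))

include hL in
lemma inner_L_L (i j : Fin n) (x y : Hn n) :
    ⟪L i x, L j y⟫ = if i = j then ⟪x, y⟫ else 0 := by
  -- first for y = xi v
  have key : ∀ (x : Hn n) (v : FreeMonoid (Fin n)),
      ⟪L i x, L j (xi v)⟫ = if i = j then ⟪x, xi v⟫ else 0 := by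
    intro x v
    rw [hL]
    have hx := (hasSum_expand x).mapL ((innerSL ℂ (xi (FreeMonoid.of j * v))).comp (L i))
    simp only [ContinuousLinearMap.coe_comp', Function.comp_apply, innerSL_apply_apply,
      ContinuousLinearMap.map_smul, inner_smul_right, hL, xi_inner_xi, smul_eq_mul] at hx
    have hx' : HasSum (fun w => if FreeMonoid.of j * v = FreeMonoid.of i * w then x w else 0)
        ⟪xi (FreeMonoid.of j * v), L i x⟫ := by
      convert hx using 2 with w
      case e'_3 => rfl
      split_ifs <;> simp
    rw [← inner_conj_symm]
    by_cases hij : i = j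
    · subst hij
      have : (fun w => if FreeMonoid.of i * v = FreeMonoid.of i * w then x w else 0)
          = fun w => if w = v then x w else 0 := by
        funext w
        by_cases h : w = v
        · subst h; simp
        · rw [if_neg h, if_neg]
          intro hc
          exact h (freeMonoid_cons_inj hc.symm).2
      rw [this] at hx'
      have : HasSum (fun w => if w = v then x w else 0) (x v) := by
        convert hasSum_ite_eq v (x v) using 2 with w
        split_ifs <;> simp_all
      rw [hx'.unique this, if_pos rfl, inner_xi_right]
    · have : (fun w => if FreeMonoid.of j * v = FreeMonoid.of i * w then x w else 0)
          = fun _ => (0:ℂ) := by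
        funext w
        rw [if_neg]
        intro hc
        exact hij (freeMonoid_cons_inj hc.symm).1
      rw [this] at hx'
      rw [hx'.unique hasSum_zero, if_neg hij]
      simp
  -- now extend in y
  have := clm_ext_xi ((innerSL ℂ (L i x)).comp (L j))
    (if i = j then innerSL ℂ x else 0) ?_ y
  · simpa [apply_ite (fun f : Hn n →L[ℂ] ℂ => f y)] using this
  · intro w
    simpa [apply_ite (fun f : Hn n →L[ℂ] ℂ => f (xi w))] using key x w

include hL in
lemma exists_B_of_gt (l : Fin n → ℂ) (hS : 1 < ∑ i, ‖l i‖ ^ 2) :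
    ∃ B : Fin n → (Hn n →L[ℂ] Hn n),
      ∑ i, (l i • (1 : Hn n →L[ℂ] Hn n) - L i) * B i = 1 := by
  set S : ℝ := ∑ i, ‖l i‖ ^ 2 with hSdef
  set T : Hn n →L[ℂ] Hn n := ∑ i, starRingEnd ℂ (l i) • L i with hT
  have hS0 : (0:ℝ) < S := lt_trans one_pos hS
  have hconj : ∀ z : ℂ, starRingEnd ℂ z * z = (‖z‖^2 : ℂ) := fun z => by
    rw [mul_comm, Complex.mul_conj']
  have hsumS : ∑ i, starRingEnd ℂ (l i) * l i = (S : ℂ) := by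
    rw [hSdef]
    push_cast
    exact Finset.sum_congr rfl fun i _ => hconj (l i)
  -- inner product identity for T
  have hTx : ∀ x : Hn n, ⟪T x, T x⟫ = (S : ℂ) * ⟪x, x⟫ := by
    intro x
    rw [hT]
    simp only [ContinuousLinearMap.sum_apply, ContinuousLinearMap.coe_smul',
      Pi.smul_apply, inner_sum, sum_inner, inner_smul_left, inner_smul_right,
      inner_L_L L hL, mul_ite, mul_zero, RingHomCompTriple.comp_apply,
      RingHom.id_apply, starRingEnd_self_apply, Finset.sum_ite_eq, Finset.sum_ite_eq',
      Finset.mem_univ, if_true, ← Finset.sum_mul, ← mul_assoc]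
    rw [← hsumS, Finset.sum_mul]
  -- norm bound
  have hTnorm : ‖T‖ ≤ Real.sqrt S := by
    refine ContinuousLinearMap.opNorm_le_bound _ (Real.sqrt_nonneg S) fun x => ?_
    have h2 : ‖T x‖^2 = S * ‖x‖^2 := by
      have h1 := hTx x
      rw [inner_self_eq_norm_sq_to_K, inner_self_eq_norm_sq_to_K] at h1
      have h3 : ((‖T x‖^2 : ℝ) : ℂ) = ((S * ‖x‖^2 : ℝ) : ℂ) := by push_cast; exact h1
      exact_mod_cast h3
    nlinarith [Real.sq_sqrt hS0.le, Real.sqrt_nonneg S, norm_nonneg (T x), norm_nonneg x,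
      mul_nonneg (Real.sqrt_nonneg S) (norm_nonneg x)]
  have hsqrt : Real.sqrt S < S := by
    nlinarith [Real.sq_sqrt hS0.le, Real.sqrt_nonneg S]
  have ha : ‖((S:ℂ))⁻¹ • T‖ < 1 := by
    have hb : ‖((S:ℂ))⁻¹ • T‖ ≤ S⁻¹ * ‖T‖ := by
      have := norm_smul_le ((S:ℂ))⁻¹ T
      simpa [Real.norm_of_nonneg hS0.le] using this
    refine lt_of_le_of_lt hb ?_
    calc S⁻¹ * ‖T‖ ≤ S⁻¹ * Real.sqrt S := by
          exact mul_le_mul_of_nonneg_left hTnorm (inv_nonneg.mpr hS0.le)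
      _ < S⁻¹ * S := by exact mul_lt_mul_of_pos_left hsqrt (inv_pos.mpr hS0)
      _ = 1 := inv_mul_cancel₀ hS0.ne'
  set u : (Hn n →L[ℂ] Hn n)ˣ := Units.oneSub _ ha with hu
  refine ⟨fun i => (starRingEnd ℂ (l i) / (S:ℂ)) • (↑u⁻¹ : Hn n →L[ℂ] Hn n), ?_⟩
  have key : ∑ i, (starRingEnd ℂ (l i) / (S:ℂ)) • (l i • (1 : Hn n →L[ℂ] Hn n) - L i)
      = (↑u : Hn n →L[ℂ] Hn n) := by
    have : (↑u : Hn n →L[ℂ] Hn n) = 1 - ((S:ℂ))⁻¹ • T := rfl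
    rw [this, hT, Finset.smul_sum]
    have : ∀ i, (starRingEnd ℂ (l i) / (S:ℂ)) • (l i • (1 : Hn n →L[ℂ] Hn n) - L i)
        = (starRingEnd ℂ (l i) * l i / (S:ℂ)) • (1 : Hn n →L[ℂ] Hn n)
          - ((S:ℂ))⁻¹ • (starRingEnd ℂ (l i) • L i) := by
      intro i
      match_scalars <;> ring
    rw [Finset.sum_congr rfl fun i _ => this i, Finset.sum_sub_distrib, ← Finset.sum_smul,
      ← Finset.sum_div, hsumS, div_self (by exact_mod_cast hS0.ne' : (S:ℂ) ≠ 0), one_smul]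
  calc ∑ i, (l i • (1 : Hn n →L[ℂ] Hn n) - L i)
        * ((starRingEnd ℂ (l i) / (S:ℂ)) • (↑u⁻¹ : Hn n →L[ℂ] Hn n))
      = (∑ i, (starRingEnd ℂ (l i) / (S:ℂ)) • (l i • (1 : Hn n →L[ℂ] Hn n) - L i))
        * (↑u⁻¹ : Hn n →L[ℂ] Hn n) := by
        rw [Finset.sum_mul]
        exact Finset.sum_congr rfl fun i _ => by
          rw [mul_smul_comm, smul_mul_assoc]
    _ = 1 := by rw [key, Units.mul_inv]

lemma norm_prod_sq (l : Fin n → ℂ) : ∀ ws : List (Fin n),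
    ‖(ws.map l).prod‖ ^ 2 = (ws.map (fun i => ‖l i‖ ^ 2)).prod := by
  intro ws
  induction ws with
  | nil => simp
  | cons a t ih => simp only [List.map_cons, List.prod_cons, norm_mul, mul_pow, ih]

lemma summable_prod_q (q : Fin n → ℝ) (hq : ∀ i, 0 ≤ q i) (hS : ∑ i, q i < 1) :
    Summable (fun w : FreeMonoid (Fin n) => ((FreeMonoid.toList w).map q).prod) := by
  set G : List (Fin n) → ℝ := fun ws => (ws.map q).prod with hG
  have hval : ∀ (k : ℕ) (v : Fin k → Fin n),
      G ((List.equivSigmaTuple (α := Fin n)).symm ⟨k, v⟩) = ∏ j, q (v j) := by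
    intro k v
    have h1 : ((List.equivSigmaTuple (α := Fin n)).symm ⟨k, v⟩) = List.ofFn v := rfl
    rw [hG]
    simp only [h1, List.map_ofFn, List.prod_ofFn]
    rfl
  have hGnn : ∀ x : (Σ k : ℕ, Fin k → Fin n),
      0 ≤ (G ∘ (List.equivSigmaTuple (α := Fin n)).symm) x := by
    rintro ⟨k, v⟩
    rw [Function.comp_apply, hval]
    exact Finset.prod_nonneg fun j _ => hq (v j)
  have hfiber : ∀ k : ℕ, ∑' v : Fin k → Fin n,
      (G ∘ (List.equivSigmaTuple (α := Fin n)).symm) ⟨k, v⟩ = (∑ i, q i) ^ k := by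
    intro k
    rw [tsum_fintype]
    simp only [Function.comp_apply, hval]
    rw [← Fintype.piFinset_univ, ← Finset.prod_univ_sum]
    simp [Finset.prod_const]
  have hG2 : Summable (G ∘ (List.equivSigmaTuple (α := Fin n)).symm) := by
    refine (summable_sigma_of_nonneg hGnn).mpr ⟨fun k => Summable.of_finite, ?_⟩
    simp only [hfiber]
    exact summable_geometric_of_lt_one (Finset.sum_nonneg fun i _ => hq i) hS
  have hGsum : Summable G := ((List.equivSigmaTuple (α := Fin n)).symm.summable_iff).mp hG2
  exact (FreeMonoid.toList.summable_iff (f := G)).mpr hGsum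

include hL in
lemma no_sol_of_lt (l : Fin n → ℂ) (hS : ∑ i, ‖l i‖ ^ 2 < 1) :
    ¬ ∃ B : Fin n → (Hn n →L[ℂ] Hn n),
      ∑ i, (l i • (1 : Hn n →L[ℂ] Hn n) - L i) * B i = 1 := by
  rintro ⟨B, hB⟩
  set c : FreeMonoid (Fin n) → ℂ := fun w => ((FreeMonoid.toList w).map l).prod with hc
  have hnormc : ∀ w : FreeMonoid (Fin n),
      ‖c w‖ ^ 2 = ((FreeMonoid.toList w).map (fun i => ‖l i‖ ^ 2)).prod := by
    intro w
    rw [hc]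
    exact norm_prod_sq l _
  have hmem : Memℓp (fun w => starRingEnd ℂ (c w)) (2 : ENNReal) := by
    apply memℓp_gen
    have h2 : ∀ w : FreeMonoid (Fin n), ‖starRingEnd ℂ (c w)‖ ^ (2 : ENNReal).toReal
        = ((FreeMonoid.toList w).map (fun i => ‖l i‖ ^ 2)).prod := by
      intro w
      rw [RCLike.norm_conj]
      have : ((2 : ENNReal).toReal) = ((2 : ℕ) : ℝ) := by simp
      rw [this, Real.rpow_natCast]
      exact hnormc w
    simp only [h2]
    exact summable_prod_q _ (fun i => sq_nonneg _) hS
  set v : Hn n := ⟨fun w => starRingEnd ℂ (c w), hmem⟩ with hv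
  have hvcoe : ∀ w, (v : ∀ _ : FreeMonoid (Fin n), ℂ) w = starRingEnd ℂ (c w) := fun w => rfl
  have hc1 : c 1 = 1 := by rw [hc]; simp
  have hcmul : ∀ (i : Fin n) (w : FreeMonoid (Fin n)), c (FreeMonoid.of i * w) = l i * c w := by
    intro i w
    rw [hc]
    simp [FreeMonoid.toList_mul, FreeMonoid.toList_of]
  have hv0 : v ≠ 0 := by
    intro h
    have h2 := congrArg (fun f : Hn n => (f : ∀ _ : FreeMonoid (Fin n), ℂ) 1) h
    simp only [hvcoe, hc1, map_one, lp.coeFn_zero, Pi.zero_apply] at h2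
    exact one_ne_zero h2
  have heig : ∀ (i : Fin n) (y : Hn n), ⟪v, L i y⟫ = l i * ⟪v, y⟫ := by
    intro i y
    have := clm_ext_xi ((innerSL ℂ v).comp (L i)) (l i • innerSL ℂ v) ?_ y
    · simpa using this
    · intro w
      simp only [ContinuousLinearMap.coe_comp', Function.comp_apply, innerSL_apply_apply,
        ContinuousLinearMap.coe_smul', Pi.smul_apply, hL, inner_xi_right, hvcoe,
        starRingEnd_self_apply, hcmul, smul_eq_mul]
  have h0 : ⟪v, v⟫ = (0:ℂ) := by
    have h1 : v = (∑ i, (l i • (1 : Hn n →L[ℂ] Hn n) - L i) * B i) v := by rw [hB]; rfl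
    calc ⟪v, v⟫ = ⟪v, (∑ i, (l i • (1 : Hn n →L[ℂ] Hn n) - L i) * B i) v⟫ := by rw [← h1]
      _ = ∑ i, ⟪v, l i • (B i v) - L i (B i v)⟫ := by
          rw [ContinuousLinearMap.sum_apply, inner_sum]
          rfl
      _ = ∑ i, (l i * ⟪v, B i v⟫ - ⟪v, L i (B i v)⟫) := by
          refine Finset.sum_congr rfl fun i _ => ?_
          rw [inner_sub_right, inner_smul_right]
      _ = 0 := by
          refine Finset.sum_eq_zero fun i _ => ?_
          rw [heig i (B i v), sub_self]
  exact hv0 (inner_self_eq_zero.mp h0)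

include hL in
lemma no_sol_of_le (l : Fin n → ℂ) (hS : ∑ i, ‖l i‖ ^ 2 ≤ 1) :
    ¬ ∃ B : Fin n → (Hn n →L[ℂ] Hn n),
      ∑ i, (l i • (1 : Hn n →L[ℂ] Hn n) - L i) * B i = 1 := by
  rintro ⟨B, hB⟩
  set K : ℝ := ∑ i, ‖l i‖ * ‖B i‖ with hK
  have hK0 : 0 ≤ K := Finset.sum_nonneg fun i _ => mul_nonneg (norm_nonneg _) (norm_nonneg _)
  set t : ℝ := 1 - 1 / (2 * (K + 1)) with ht
  have ht1 : t < 1 := by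
    rw [ht]; have : 0 < 1 / (2 * (K + 1)) := by positivity
    linarith
  have ht0 : 0 ≤ t := by
    rw [ht]
    have h1 : 1 / (2 * (K + 1)) ≤ 1 / 2 := by
      apply div_le_div_of_nonneg_left <;> linarith
    linarith
  have htK : (1 - t) * K < 1 := by
    rw [ht]
    have h2 : (0:ℝ) < 2 * (K + 1) := by linarith
    rw [sub_sub_cancel, div_mul_eq_mul_div, div_lt_one h2]
    linarith
  set l' : Fin n → ℂ := fun i => (t : ℂ) * l i with hl'
  have hS' : ∑ i, ‖l' i‖ ^ 2 < 1 := by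
    have : ∀ i, ‖l' i‖ ^ 2 = t ^ 2 * ‖l i‖ ^ 2 := by
      intro i
      rw [hl']
      simp only [norm_mul, Complex.norm_real, Real.norm_of_nonneg ht0, mul_pow]
    rw [Finset.sum_congr rfl fun i _ => this i, ← Finset.mul_sum]
    have ht2 : t ^ 2 < 1 := by nlinarith
    nlinarith [Finset.sum_nonneg (fun i (_ : i ∈ Finset.univ) => sq_nonneg ‖l i‖)]
  set E : Hn n →L[ℂ] Hn n := ∑ i, (((t:ℂ) - 1) * l i) • B i with hE
  have hEnorm : ‖E‖ < 1 := by
    have h1 : ‖E‖ ≤ ∑ i, ‖(((t:ℂ) - 1) * l i) • B i‖ := norm_sum_le _ _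
    have h2 : ∀ i, ‖(((t:ℂ) - 1) * l i) • B i‖ ≤ (1 - t) * (‖l i‖ * ‖B i‖) := by
      intro i
      have := norm_smul_le (((t:ℂ) - 1) * l i) (B i)
      have h3 : ‖((t:ℂ) - 1) * l i‖ = (1 - t) * ‖l i‖ := by
        rw [norm_mul]
        congr 1
        have : ((t:ℂ) - 1) = ((t - 1 : ℝ) : ℂ) := by push_cast; ring
        rw [this, Complex.norm_real, Real.norm_eq_abs, abs_of_nonpos (by linarith)]
        ring
      calc ‖(((t:ℂ) - 1) * l i) • B i‖ ≤ ‖((t:ℂ) - 1) * l i‖ * ‖B i‖ := this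
        _ = (1 - t) * (‖l i‖ * ‖B i‖) := by rw [h3]; ring
    calc ‖E‖ ≤ ∑ i, ‖(((t:ℂ) - 1) * l i) • B i‖ := h1
      _ ≤ ∑ i, (1 - t) * (‖l i‖ * ‖B i‖) := Finset.sum_le_sum fun i _ => h2 i
      _ = (1 - t) * K := by rw [hK, Finset.mul_sum]
      _ < 1 := htK
  have heq : ∑ i, (l' i • (1 : Hn n →L[ℂ] Hn n) - L i) * B i = 1 + E := by
    have hsplit : ∀ i, (l' i • (1 : Hn n →L[ℂ] Hn n) - L i)
        = (l i • (1 : Hn n →L[ℂ] Hn n) - L i) + (((t:ℂ) - 1) * l i) • 1 := by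
      intro i
      rw [hl']
      match_scalars <;> ring
    rw [Finset.sum_congr rfl fun i _ => by rw [hsplit i, add_mul], Finset.sum_add_distrib, hB,
      hE]
    simp only [smul_mul_assoc, one_mul]
  have hEnorm' : ‖-E‖ < 1 := by rwa [norm_neg]
  set u : (Hn n →L[ℂ] Hn n)ˣ := Units.oneSub (-E) hEnorm' with hu
  have huval : (↑u : Hn n →L[ℂ] Hn n) = 1 + E := by
    show 1 - (-E) = 1 + E
    rw [sub_neg_eq_add]
  have : ∃ B : Fin n → (Hn n →L[ℂ] Hn n),
      ∑ i, (l' i • (1 : Hn n →L[ℂ] Hn n) - L i) * B i = 1 := by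
    refine ⟨fun i => B i * (↑u⁻¹ : Hn n →L[ℂ] Hn n), ?_⟩
    calc ∑ i, (l' i • (1 : Hn n →L[ℂ] Hn n) - L i) * (B i * (↑u⁻¹ : Hn n →L[ℂ] Hn n))
        = (∑ i, (l' i • (1 : Hn n →L[ℂ] Hn n) - L i) * B i) * (↑u⁻¹ : Hn n →L[ℂ] Hn n) := by
          rw [Finset.sum_mul]
          exact Finset.sum_congr rfl fun i _ => (mul_assoc _ _ _).symm
      _ = (↑u : Hn n →L[ℂ] Hn n) * (↑u⁻¹ : Hn n →L[ℂ] Hn n) := by rw [heq, huval]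
      _ = 1 := Units.mul_inv u
  exact no_sol_of_lt L hL l' hS' this

end Aux

/-- For `λ ∈ ℂⁿ`, there are bounded operators `B_1, …, B_n` with
`(λ_1 I − L_1)B_1 + … + (λ_n I − L_n)B_n = I` if and only if `Σ_i |λ_i|² > 1`;
equivalently, the joint right spectrum of the left creation operators is the closed
unit ball of `ℂⁿ`. -/
theorem right_spectrum_of_creation_operators (n : ℕ) (hn : 2 ≤ n)
    (L : Fin n → (Hn n →L[ℂ] Hn n))
    (hL : ∀ i w, L i (xi w) = xi (FreeMonoid.of i * w)) :
    (∀ l : Fin n → ℂ,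
        (∃ B : Fin n → (Hn n →L[ℂ] Hn n),
          ∑ i, (l i • (1 : Hn n →L[ℂ] Hn n) - L i) * B i = 1) ↔
          1 < ∑ i, ‖l i‖ ^ 2) ∧
      {l : Fin n → ℂ | ¬ ∃ B : Fin n → (Hn n →L[ℂ] Hn n),
          ∑ i, (L i - l i • (1 : Hn n →L[ℂ] Hn n)) * B i = 1} =
        {l : Fin n → ℂ | ∑ i, ‖l i‖ ^ 2 ≤ 1} := by
  have main : ∀ l : Fin n → ℂ,
      (∃ B : Fin n → (Hn n →L[ℂ] Hn n),
        ∑ i, (l i • (1 : Hn n →L[ℂ] Hn n) - L i) * B i = 1) ↔ 1 < ∑ i, ‖l i‖ ^ 2 := by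
    intro l
    constructor
    · intro hB
      by_contra h
      exact no_sol_of_le L hL l (not_lt.mp h) hB
    · exact exists_B_of_gt L hL l
  refine ⟨main, ?_⟩
  ext l
  simp only [Set.mem_setOf_eq]
  have hne : (∃ B : Fin n → (Hn n →L[ℂ] Hn n),
      ∑ i, (L i - l i • (1 : Hn n →L[ℂ] Hn n)) * B i = 1) ↔
      (∃ B : Fin n → (Hn n →L[ℂ] Hn n),
      ∑ i, (l i • (1 : Hn n →L[ℂ] Hn n) - L i) * B i = 1) := by
    constructor
    · rintro ⟨B, h⟩
      refine ⟨fun i => -B i, ?_⟩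
      calc ∑ i, (l i • (1 : Hn n →L[ℂ] Hn n) - L i) * (-B i)
          = ∑ i, (L i - l i • (1 : Hn n →L[ℂ] Hn n)) * B i :=
            Finset.sum_congr rfl fun i _ => by rw [mul_neg, ← neg_mul, neg_sub]
        _ = 1 := h
    · rintro ⟨B, h⟩
      refine ⟨fun i => -B i, ?_⟩
      calc ∑ i, (L i - l i • (1 : Hn n →L[ℂ] Hn n)) * (-B i)
          = ∑ i, (l i • (1 : Hn n →L[ℂ] Hn n) - L i) * B i :=
            Finset.sum_congr rfl fun i _ => by rw [mul_neg, ← neg_mul, neg_sub]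
        _ = 1 := h
  rw [hne, main l, not_lt]
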